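/- Fix t > 0 and a map ι : M → ℝ^D on a compact metric space M, with K(x,y) = exp(−‖ι(x) − ι(y)‖²/t) continuous and strictly positive. For i = 1, 2 let m_i be finite nonatomic Borel measures on M with full support that are mutually absolutely continuous with continuous positive derivative. Define (L_i f)(x) = t^{−(d/2+1)} ∫ K(x,y)(f(x) − f(y)) dm_i(y). If L₁ = L₂ as operators on C(M), then m₁ = m₂. -/

import Mathlib

open MeasureTheory Filter Topology

/-- Extrinsic identifiability of the sampling measure: with a fixed
embedding `ι : M → ℝ^D` (hence a fixed Gaussian kernel `K(x,y) = exp(−‖ι x − ι y‖²/t)`),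
if the unnormalized graph Laplace operators built from two finite nonatomic fully
supported, mutually absolutely continuous measures `m₁, m₂` (with continuous positive
derivative `w`, `dm₂ = w dm₁`) coincide on `C(M)`, then `m₁ = m₂`. -/
theorem stmt_18 {M : Type*} [MetricSpace M] [CompactSpace M]
    [MeasurableSpace M] [BorelSpace M]
    {D : ℕ} (t : ℝ) (ht : 0 < t) (d : ℕ)
    (ι : M → EuclideanSpace ℝ (Fin D)) (hι : Continuous ι)
    (m₁ m₂ : Measure M) [IsFiniteMeasure m₁] [IsFiniteMeasure m₂]
    [NullSingletonClass m₁] [NullSingletonClass m₂] [m₁.IsOpenPosMeasure] [m₂.IsOpenPosMeasure]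
    (w : M → ℝ) (hw : Continuous w) (hwpos : ∀ y, 0 < w y)
    (hac : m₂ = m₁.withDensity fun y => ENNReal.ofReal (w y))
    (h : ∀ f : C(M, ℝ), ∀ x : M,
      t ^ (-((d : ℝ) / 2 + 1)) *
          ∫ y, Real.exp (-‖ι x - ι y‖ ^ 2 / t) * (f x - f y) ∂m₁ =
      t ^ (-((d : ℝ) / 2 + 1)) *
          ∫ y, Real.exp (-‖ι x - ι y‖ ^ 2 / t) * (f x - f y) ∂m₂) :
    m₁ = m₂ := by
  -- it suffices to show `w = 1` everywhere
  suffices hw1 : ∀ y, w y = 1 by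
    have : (fun y => ENNReal.ofReal (w y)) = fun _ => (1 : ENNReal) := by
      funext y; simp [hw1 y]
    rw [hac, this]
    exact (withDensity_one (μ := m₁)).symm
  -- trivial if `M` is empty
  rcases isEmpty_or_nonempty M with hM | hM
  · exact fun y => (hM.false y).elim
  set K : M → M → ℝ := fun x y => Real.exp (-‖ι x - ι y‖ ^ 2 / t) with hKdef
  have hKx : ∀ x, Continuous fun y => K x y := fun x =>
    Real.continuous_exp.comp (((continuous_const.sub hι).norm.pow 2).neg.div_const t)
  have hKpos : ∀ x y, 0 < K x y := fun x y => Real.exp_pos _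
  -- integrability of continuous functions
  have integ : ∀ g : M → ℝ, Continuous g → Integrable g m₁ := fun g hg =>
    hg.integrable_of_hasCompactSupport (HasCompactSupport.of_compactSpace g)
  set u : M → ℝ := fun y => w y - 1 with hudef
  have hu : Continuous u := hw.sub continuous_const
  -- transfer integrals over m₂ to integrals over m₁
  have hm2 : ∀ g : M → ℝ, (∫ y, g y ∂m₂) = ∫ y, w y * g y ∂m₁ := by
    intro g
    rw [hac]
    have hmeas : Measurable fun y => (w y).toNNReal :=
      (hw.measurable).real_toNNReal
    have : (fun y => ENNReal.ofReal (w y)) = fun y => ((w y).toNNReal : ENNReal) := rfl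
    rw [this, integral_withDensity_eq_integral_smul hmeas]
    congr 1
    funext y
    rw [NNReal.smul_def, smul_eq_mul, Real.coe_toNNReal _ (hwpos y).le]
  -- Step A: for every continuous f and point x,
  --   ∫ K x y * (f x - f y) * u y dm₁ = 0
  have stepA : ∀ f : C(M, ℝ), ∀ x, ∫ y, K x y * (f x - f y) * u y ∂m₁ = 0 := by
    intro f x
    have h' := h f x
    have hne : t ^ (-((d : ℝ) / 2 + 1)) ≠ 0 := (Real.rpow_pos_of_pos ht _).ne'
    have h'' : (∫ y, K x y * (f x - f y) ∂m₁) = ∫ y, K x y * (f x - f y) ∂m₂ :=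
      mul_left_cancel₀ hne h'
    rw [hm2 (fun y => K x y * (f x - f y))] at h''
    have hc1 : Continuous fun y => K x y * (f x - f y) :=
      (hKx x).mul (continuous_const.sub f.continuous)
    have hc2 : Continuous fun y => w y * (K x y * (f x - f y)) := hw.mul hc1
    have := sub_eq_zero_of_eq h''
    rw [← integral_sub (integ _ hc1) (integ _ hc2)] at this
    calc (∫ y, K x y * (f x - f y) * u y ∂m₁)
        = ∫ y, -(K x y * (f x - f y) - w y * (K x y * (f x - f y))) ∂m₁ := by
          congr 1; funext y; simp only [hudef]; ring
      _ = -(∫ y, (K x y * (f x - f y) - w y * (K x y * (f x - f y))) ∂m₁) :=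
          integral_neg _
      _ = 0 := by rw [this, neg_zero]
  obtain ⟨x⟩ := hM
  -- Step B: for continuous g vanishing at x, ∫ K x y * g y * u y dm₁ = 0
  have stepB : ∀ g : M → ℝ, Continuous g → g x = 0 →
      (∫ y, K x y * g y * u y ∂m₁) = 0 := by
    intro g hg hgx
    have := stepA ⟨g, hg⟩ x
    simp only [ContinuousMap.coe_mk, hgx, zero_sub] at this
    have h2 : (∫ y, K x y * g y * u y ∂m₁)
        = -(∫ y, K x y * (-g y) * u y ∂m₁) := by
      rw [← integral_neg]; congr 1; funext y; ring
    rw [h2, this, neg_zero]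
  -- cutoff functions
  set φ : ℕ → M → ℝ := fun n y => min 1 (n * dist x y) with hφdef
  have hφc : ∀ n, Continuous (φ n) := fun n =>
    continuous_const.min (continuous_const.mul (continuous_const.dist continuous_id))
  have hφ0 : ∀ n, φ n x = 0 := by intro n; simp [hφdef]
  have hφ01 : ∀ n y, 0 ≤ φ n y ∧ φ n y ≤ 1 := by
    intro n y
    constructor
    · exact le_min one_pos.le (by positivity)
    · exact min_le_left _ _
  set F : M → ℝ := fun y => K x y * u y ^ 2 with hFdef
  have hFc : Continuous F := (hKx x).mul (hu.pow 2)
  have hFnn : ∀ y, 0 ≤ F y := fun y => mul_nonneg (hKpos x y).le (sq_nonneg _)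
  -- each cutoff integral vanishes
  have hzero : ∀ n, (∫ y, F y * φ n y ∂m₁) = 0 := by
    intro n
    have := stepB (fun y => u y * φ n y) (hu.mul (hφc n)) (by simp [hφ0 n])
    calc (∫ y, F y * φ n y ∂m₁)
        = ∫ y, K x y * (u y * φ n y) * u y ∂m₁ := by
          congr 1; funext y; simp only [hFdef]; ring
      _ = 0 := this
  -- dominated convergence: ∫ F dm₁ = 0
  have hlim : Tendsto (fun n => ∫ y, F y * φ n y ∂m₁) atTop (𝓝 (∫ y, F y ∂m₁)) := by
    apply tendsto_integral_of_dominated_convergence F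
    · intro n
      exact (hFc.mul (hφc n)).aestronglyMeasurable
    · exact integ F hFc
    · intro n
      filter_upwards with y
      rw [Real.norm_eq_abs, abs_of_nonneg (mul_nonneg (hFnn y) (hφ01 n y).1)]
      nth_rewrite 2 [← mul_one (F y)]
      exact mul_le_mul_of_nonneg_left (hφ01 n y).2 (hFnn y)
    · have hx : m₁ {x} = 0 := measure_singleton x
      filter_upwards [compl_mem_ae_iff.2 hx] with y hy
      have hyx : y ≠ x := hy
      have hd : 0 < dist x y := dist_pos.2 hyx.symm
      have : ∀ᶠ n : ℕ in atTop, F y * φ n y = F y := by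
        obtain ⟨N, hN⟩ := exists_nat_ge (1 / dist x y)
        filter_upwards [eventually_ge_atTop N] with n hn
        have h1 : (1 : ℝ) ≤ n * dist x y := by
          rw [div_le_iff₀ hd] at hN
          calc (1 : ℝ) ≤ N * dist x y := hN
            _ ≤ n * dist x y := by
                apply mul_le_mul_of_nonneg_right _ hd.le
                exact_mod_cast hn
        simp [hφdef, min_eq_left h1]
      exact Tendsto.congr' (this.mono fun n hn => hn.symm) tendsto_const_nhds
  have hFint : (∫ y, F y ∂m₁) = 0 := by
    rw [funext hzero] at hlim
    exact tendsto_nhds_unique hlim tendsto_const_nhds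
  have hae : F =ᵐ[m₁] 0 :=
    (integral_eq_zero_iff_of_nonneg hFnn (integ F hFc)).1 hFint
  have hFeq : F = 0 := (hFc.ae_eq_iff_eq m₁ continuous_const).1 hae
  intro y
  have hFy : K x y * u y ^ 2 = 0 := congrFun hFeq y
  have : u y = 0 := by
    have := (mul_eq_zero.1 hFy).resolve_left (hKpos x y).ne'
    exact pow_eq_zero_iff (n := 2) (by norm_num) |>.1 this
  have : w y - 1 = 0 := this
  linarith
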